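/- Let n ≥ p ≥ 1 and let U, Q ∈ ℝ^{n×p} satisfy UᵀU = I_p, QᵀQ = I_p and UᵀQ = 0. Let A ∈ ℝ^{p×p} be skew-symmetric and B ∈ ℝ^{p×p} arbitrary, and write the matrix exponential in p×p blocks as exp_m([[A, −Bᵀ],[B, 0]]) = [[M, X],[N, Y]]. Set Ũ := UM + QN. Then for every orthogonal matrix Ψ ∈ ℝ^{p×p}, putting R_E := ΨB and Q_E := QΨᵀ, and letting M' and N_E denote the top-left and bottom-left p×p blocks of exp_m([[A, −R_Eᵀ],[R_E, 0]]), one has U M' + Q_E N_E = Ũ. (In other words, the Edelman–Arias–Smith Stiefel exponential formula applied to Δ = UA + QB, with any factorization Q_E R_E = QB of this form, reproduces Ũ, so Δ is the Riemannian logarithm of Ũ at U.) -/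

import Mathlib

open Matrix

/-- Spectral norm (largest singular value) of a real matrix: the operator norm of the
induced linear map between Euclidean spaces. -/
noncomputable def sNorm {m n : Type*} [Fintype m] [Fintype n] [DecidableEq n]
    (A : Matrix m n ℝ) : ℝ :=
  ‖(Matrix.toEuclideanLin A).toContinuousLinearMap‖

/-- the Edelman–Arias–Smith Stiefel exponential formula applied to
`Δ = UA + QB`, with any factorization `Q_E R_E = QB` with `R_E = ΨB`, `Q_E = QΨᵀ`
for orthogonal `Ψ`, reproduces `Ũ = UM + QN`. -/
theorem stmt_0 (n p : ℕ) (hp : 1 ≤ p) (hnp : p ≤ n)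
    (U Q : Matrix (Fin n) (Fin p) ℝ)
    (hU : Uᵀ * U = 1) (hQ : Qᵀ * Q = 1) (hUQ : Uᵀ * Q = 0)
    (A B : Matrix (Fin p) (Fin p) ℝ) (hA : Aᵀ = -A)
    (M X N Y : Matrix (Fin p) (Fin p) ℝ)
    (hexp : NormedSpace.exp (Matrix.fromBlocks A (-Bᵀ) B 0) = Matrix.fromBlocks M X N Y)
    (Utilde : Matrix (Fin n) (Fin p) ℝ) (hUtilde : Utilde = U * M + Q * N)
    (Ψ : Matrix (Fin p) (Fin p) ℝ) (hΨ : Ψᵀ * Ψ = 1 ∧ Ψ * Ψᵀ = 1)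
    (RE : Matrix (Fin p) (Fin p) ℝ) (hRE : RE = Ψ * B)
    (QE : Matrix (Fin n) (Fin p) ℝ) (hQE : QE = Q * Ψᵀ)
    (M' X' NE Y' : Matrix (Fin p) (Fin p) ℝ)
    (hexp' : NormedSpace.exp (Matrix.fromBlocks A (-REᵀ) RE 0) =
      Matrix.fromBlocks M' X' NE Y') :
    U * M' + QE * NE = Utilde := by
  set P : Matrix (Fin p ⊕ Fin p) (Fin p ⊕ Fin p) ℝ := Matrix.fromBlocks 1 0 0 Ψ with hP
  have hPinv : P⁻¹ = Matrix.fromBlocks 1 0 0 Ψᵀ := by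
    apply Matrix.inv_eq_right_inv
    simp [hP, Matrix.fromBlocks_multiply, hΨ.2]
  have hPunit : IsUnit P := by
    refine (Matrix.isUnit_iff_isUnit_det P).mpr (Matrix.isUnit_det_of_right_inverse (B := Matrix.fromBlocks 1 0 0 Ψᵀ) ?_)
    simp [hP, Matrix.fromBlocks_multiply, hΨ.2]
  have hconj : P * Matrix.fromBlocks A (-Bᵀ) B 0 * P⁻¹ =
      Matrix.fromBlocks A (-REᵀ) RE 0 := by
    rw [hPinv]
    simp [hP, Matrix.fromBlocks_multiply, hRE, Matrix.transpose_mul, Matrix.mul_assoc,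
      Matrix.neg_mul, Matrix.mul_neg]
  have key : Matrix.fromBlocks M' X' NE Y' =
      P * Matrix.fromBlocks M X N Y * P⁻¹ := by
    rw [← hexp, ← hexp', ← hconj, Matrix.exp_conj P _ hPunit]
  rw [hPinv, hP] at key
  simp only [Matrix.fromBlocks_multiply, Matrix.one_mul, Matrix.mul_one, Matrix.zero_mul,
    Matrix.mul_zero, add_zero, zero_add] at key
  have hM' : M' = M := (Matrix.fromBlocks_inj.mp key).1
  have hNE : NE = Ψ * N := (Matrix.fromBlocks_inj.mp key).2.2.1
  rw [hM', hNE, hQE, hUtilde, Matrix.mul_assoc, ← Matrix.mul_assoc Ψᵀ, hΨ.1,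
    Matrix.one_mul]
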